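/- arXiv:1007.3890 — 2 statements merged into one kernel-verified Lean document; each statement's English description precedes it below -/
import Mathlib

section
/- Let Ω ⊂ ℝⁿ be a convex domain and let u : Ω → ℝ be C² with D²u ≥ 2ε₀·I for some ε₀ > 0. Let φ : Ω × ℝⁿ → ℝ be C² with ‖D²φ‖ < ε₀ (so the cost c(x,y) = −x·y + φ(x,y) differs from the bilinear cost by less than ε₀ in C²). Suppose c_{y₀}(x) = −x·y₀ + φ(x,y₀) is a supporting function of u near x₀ (touching u from below locally at x₀) and that c_{y₀}(x₁) = u(x₁) at another point x₁ ≠ x₀ with Dc_{y₀}(x₀) = Du(x₀). Then a contradiction follows; hence u is c-convex. -/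
open RealInnerProductSpace

lemma line_deriv2 {n : ℕ} (h : EuclideanSpace ℝ (Fin n) → ℝ) (hh : ContDiff ℝ 2 h)
    (x₀ v : EuclideanSpace ℝ (Fin n)) (t : ℝ) :
    deriv (deriv fun s : ℝ => h (x₀ + s • v)) t
      = iteratedFDeriv ℝ 2 h (x₀ + t • v) ![v, v] := by
  have hγ : ∀ s : ℝ, HasDerivAt (fun s : ℝ => x₀ + s • v) v s := fun s => by
    simpa using ((hasDerivAt_id s).smul_const v).const_add x₀
  have hd1 : (deriv fun s : ℝ => h (x₀ + s • v))
      = fun s => fderiv ℝ h (x₀ + s • v) v := by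
    funext s
    exact (((hh.differentiable (by norm_num)) _).hasFDerivAt.comp_hasDerivAt s (hγ s)).deriv
  rw [hd1, iteratedFDeriv_two_apply]
  have hdf : ContDiff ℝ 1 (fderiv ℝ h) := hh.fderiv_right (le_refl 2)
  have h2 : HasDerivAt (fun s : ℝ => fderiv ℝ h (x₀ + s • v))
      (fderiv ℝ (fderiv ℝ h) (x₀ + t • v) v) t :=
    ((hdf.differentiable (by norm_num)) _).hasFDerivAt.comp_hasDerivAt t (hγ t)
  have h3 := ((ContinuousLinearMap.apply ℝ ℝ v).hasFDerivAt.comp_hasDerivAt t h2)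
  simpa [Function.comp_def] using h3.deriv

lemma clm_iteratedFDeriv_two {n : ℕ} (L : EuclideanSpace ℝ (Fin n) →L[ℝ] ℝ)
    (x : EuclideanSpace ℝ (Fin n)) (m : Fin 2 → EuclideanSpace ℝ (Fin n)) :
    iteratedFDeriv ℝ 2 (⇑L) x m = 0 := by
  rw [iteratedFDeriv_two_apply]
  have : fderiv ℝ (⇑L) = fun _ => L := funext fun z => L.fderiv
  rw [this, fderiv_fun_const]
  simp


set_option maxHeartbeats 1000000 in
/-- c-convexity contradiction lemma: a strongly convex `u` (with `D²u ≥ 2ε₀ I`) cannot be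
supported from below by the cost function `c_{y₀}(x) = -⟨x,y₀⟩ + φ(x,y₀)` (with `‖D²φ‖ < ε₀`)
touching at `x₀` with matching gradient and again at another point `x₁`. -/
theorem c_convexity_contradiction {n : ℕ} (ε₀ : ℝ) (hε₀ : 0 < ε₀)
    (Ω : Set (EuclideanSpace ℝ (Fin n))) (hΩ : Convex ℝ Ω)
    (u : EuclideanSpace ℝ (Fin n) → ℝ) (hu : ContDiff ℝ 2 u)
    (huconv : ∀ x ∈ Ω, ∀ v : EuclideanSpace ℝ (Fin n),
      2 * ε₀ * ‖v‖ ^ 2 ≤ iteratedFDeriv ℝ 2 u x ![v, v])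
    (φ : EuclideanSpace ℝ (Fin n) → EuclideanSpace ℝ (Fin n) → ℝ)
    (y₀ : EuclideanSpace ℝ (Fin n))
    (hφ : ContDiff ℝ 2 (fun x => φ x y₀))
    (hφ2 : ∀ x ∈ Ω, ∀ v : EuclideanSpace ℝ (Fin n),
      |iteratedFDeriv ℝ 2 (fun z => φ z y₀) x ![v, v]| ≤ ε₀ * ‖v‖ ^ 2)
    (g : EuclideanSpace ℝ (Fin n) → ℝ)
    (hg : g = fun x => -⟪x, y₀⟫ + φ x y₀)
    (x₀ x₁ : EuclideanSpace ℝ (Fin n)) (hx01 : x₁ ≠ x₀)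
    (hx₀ : x₀ ∈ Ω) (hx₁ : x₁ ∈ Ω)
    (hsupp : ∀ x ∈ Ω, g x ≤ u x)
    (htouch₀ : g x₀ = u x₀)
    (hgrad₀ : fderiv ℝ g x₀ = fderiv ℝ u x₀)
    (htouch₁ : g x₁ = u x₁) :
    False := by
  set L : EuclideanSpace ℝ (Fin n) →L[ℝ] ℝ := -(innerSL ℝ y₀) with hL
  have hLapp : ∀ x, L x = -⟪x, y₀⟫ := fun x => by
    simp only [hL, ContinuousLinearMap.neg_apply, innerSL_apply_apply]
    rw [real_inner_comm]
  clear_value L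
  have hgL : g = fun x => L x + φ x y₀ := by
    rw [hg]; funext x; rw [hLapp]
  -- g is C²
  have hgC2 : ContDiff ℝ 2 g := by
    rw [hgL]; exact (L.contDiff).add hφ
  set v : EuclideanSpace ℝ (Fin n) := x₁ - x₀ with hv
  clear_value v
  have hvne : v ≠ 0 := by rw [hv]; exact sub_ne_zero.mpr hx01
  have hvpos : 0 < ‖v‖ ^ 2 := pow_pos (norm_pos_iff.mpr hvne) 2
  set h : EuclideanSpace ℝ (Fin n) → ℝ := fun x => u x + -(g x) with hhdef
  clear_value h
  have hh : ContDiff ℝ 2 h := by rw [hhdef]; exact hu.add hgC2.neg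
  -- key second derivative bound
  have key : ∀ x ∈ Ω, ε₀ * ‖v‖ ^ 2 ≤ iteratedFDeriv ℝ 2 h x ![v, v] := by
    intro x hx
    have h1 : iteratedFDeriv ℝ 2 h x ![v, v]
        = iteratedFDeriv ℝ 2 u x ![v, v] - iteratedFDeriv ℝ 2 g x ![v, v] := by
      have e1 : (fun x => -(g x)) = -g := rfl
      rw [hhdef, iteratedFDeriv_add_apply' (i := 2) (x := x) hu.contDiffAt hgC2.neg.contDiffAt, e1, iteratedFDeriv_neg_apply]
      simp [sub_eq_add_neg]
    have h2 : iteratedFDeriv ℝ 2 g x ![v, v]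
        = iteratedFDeriv ℝ 2 (fun z => φ z y₀) x ![v, v] := by
      rw [hgL, iteratedFDeriv_add_apply' (i := 2) (x := x) L.contDiff.contDiffAt hφ.contDiffAt]
      simp [clm_iteratedFDeriv_two]
    have h3 := huconv x hx v
    have h4 := (abs_le.mp (hφ2 x hx v)).2
    rw [h1, h2]; nlinarith
  -- the function along the segment
  set f : ℝ → ℝ := fun t => h (x₀ + t • v) with hf
  clear_value f
  have hmem : ∀ t ∈ Set.Icc (0:ℝ) 1, x₀ + t • v ∈ Ω := by
    intro t ht
    have : x₀ + t • v = (1 - t) • x₀ + t • x₁ := by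
      rw [hv]; module
    rw [this]
    exact hΩ hx₀ hx₁ (by linarith [ht.2]) ht.1 (by ring)
  have hsc : StrictConvexOn ℝ (Set.Icc (0:ℝ) 1) f := by
    apply strictConvexOn_of_deriv2_pos (convex_Icc 0 1)
    · rw [hf]
      exact (Continuous.comp hh.continuous
        (continuous_const.add (continuous_id.smul continuous_const))).continuousOn
    · intro t ht
      rw [interior_Icc] at ht
      have : deriv^[2] f t = deriv (deriv f) t := rfl
      rw [this, hf, line_deriv2 h hh x₀ v t]
      have := key _ (hmem t ⟨le_of_lt ht.1, le_of_lt ht.2⟩)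
      nlinarith
  have hγ0 : x₀ + (0:ℝ) • v = x₀ := by module
  have hγ1 : x₀ + (1:ℝ) • v = x₁ := by rw [hv]; module
  have hf0 : f 0 = 0 := by
    simp only [hf, hhdef, hγ0]
    rw [htouch₀]; ring
  have hf1 : f 1 = 0 := by
    simp only [hf, hhdef, hγ1]
    rw [htouch₁]; ring
  have hhalf : (0:ℝ) ≤ f (1/2) := by
    have hm := hmem (1/2) (by norm_num)
    have h5 := hsupp _ hm
    simp only [hf, hhdef]
    linarith
  have hlt := hsc.2 (Set.left_mem_Icc.mpr zero_le_one) (Set.right_mem_Icc.mpr zero_le_one)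
    (by norm_num) (by norm_num : (0:ℝ) < 1/2) (by norm_num : (0:ℝ) < 1/2) (by norm_num)
  rw [hf0, hf1] at hlt
  have e : (1/2:ℝ) • (0:ℝ) + (1/2:ℝ) • (1:ℝ) = 1/2 := by norm_num
  rw [e] at hlt
  simp only [smul_eq_mul] at hlt
  linarith
end

section
/- Let u : Ω → ℝ be C² on a convex domain Ω ⊂ ℝⁿ with D²u ≥ 2ε₀·I, ε₀ > 0, and let c(x,y) = −x·y + φ(x,y) with ‖φ‖_{C²} < ε₀. Define T(x) implicitly by Du(x) = D_x c(x, T(x)). Then T is injective on Ω. -/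
set_option maxHeartbeats 1000000


open RealInnerProductSpace

/-- Injectivity of the optimal map: if `D²u ≥ 2ε₀ I` on a convex domain and the cost
`c(x,y) = -⟨x,y⟩ + φ(x,y)` is within `ε₀` of the bilinear cost in `C²`, then the map `T`
defined by `Du(x) = D_x c(x, T(x))` is injective on `Ω`. -/
theorem transport_map_injective {n : ℕ} (ε₀ : ℝ) (hε₀ : 0 < ε₀)
    (Ω : Set (EuclideanSpace ℝ (Fin n))) (hΩ : Convex ℝ Ω)
    (u : EuclideanSpace ℝ (Fin n) → ℝ) (hu : ContDiff ℝ 2 u)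
    (huconv : ∀ x ∈ Ω, ∀ v : EuclideanSpace ℝ (Fin n),
      2 * ε₀ * ‖v‖ ^ 2 ≤ iteratedFDeriv ℝ 2 u x ![v, v])
    (φ : EuclideanSpace ℝ (Fin n) → EuclideanSpace ℝ (Fin n) → ℝ)
    (hφ : ∀ y, ContDiff ℝ 2 (fun x => φ x y))
    (hφ2 : ∀ (y : EuclideanSpace ℝ (Fin n)), ∀ x ∈ Ω, ∀ v : EuclideanSpace ℝ (Fin n),
      |iteratedFDeriv ℝ 2 (fun z => φ z y) x ![v, v]| ≤ ε₀ * ‖v‖ ^ 2)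
    (c : EuclideanSpace ℝ (Fin n) → EuclideanSpace ℝ (Fin n) → ℝ)
    (hc : c = fun x y => -⟪x, y⟫ + φ x y)
    (T : EuclideanSpace ℝ (Fin n) → EuclideanSpace ℝ (Fin n))
    (hT : ∀ x ∈ Ω, fderiv ℝ u x = fderiv ℝ (fun z => c z (T x)) x) :
    Set.InjOn T Ω := by
  subst hc
  intro x₀ hx₀ x₁ hx₁ hTeq
  by_contra hne
  set y := T x₀ with hy
  set L : EuclideanSpace ℝ (Fin n) →L[ℝ] ℝ := (innerSL ℝ).flip y with hLdef
  have hLapp : ∀ z, L z = ⟪z, y⟫ := fun z => rfl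
  have hcy : (fun z => -⟪z, y⟫ + φ z y) = fun z => φ z y - L z := by
    funext z; simp [hLapp, neg_add_eq_sub]
  set cy : EuclideanSpace ℝ (Fin n) → ℝ := fun z => φ z y - L z with hcydef
  have hcyC2 : ContDiff ℝ 2 cy := (hφ y).sub L.contDiff
  set g : EuclideanSpace ℝ (Fin n) → ℝ := fun z => u z - cy z with hgdef
  have hgC2 : ContDiff ℝ 2 g := hu.sub hcyC2
  set v := x₁ - x₀ with hv
  have hvne : v ≠ 0 := sub_ne_zero.mpr (fun h => hne h.symm)
  -- first derivative of g
  have hDg : ∀ x, fderiv ℝ g x = fderiv ℝ u x - fderiv ℝ cy x := by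
    intro x
    exact fderiv_fun_sub (hu.differentiable two_ne_zero).differentiableAt
      (hcyC2.differentiable two_ne_zero).differentiableAt
  have hDg0 : fderiv ℝ g x₀ = 0 := by
    have h0 := hT x₀ hx₀
    rw [← hy, hcy] at h0
    rw [hDg, h0, hcydef, sub_self]
  have hDg1 : fderiv ℝ g x₁ = 0 := by
    have h1 := hT x₁ hx₁
    rw [← hTeq, hcy] at h1
    rw [hDg, h1, hcydef, sub_self]
  -- second derivative of g
  have hDcy : ∀ x, fderiv ℝ cy x = fderiv ℝ (fun z => φ z y) x - L := by
    intro x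
    rw [hcydef]
    rw [show (fun z => φ z y - L z) = fun z => (fun w => φ w y) z - L z from rfl]
    rw [fderiv_fun_sub ((hφ y).differentiable two_ne_zero).differentiableAt
      L.differentiableAt, L.fderiv]
  have hD2g : ∀ x, fderiv ℝ (fderiv ℝ g) x
      = fderiv ℝ (fderiv ℝ u) x - fderiv ℝ (fderiv ℝ (fun z => φ z y)) x := by
    intro x
    have e1 : fderiv ℝ g = fun x => fderiv ℝ u x - (fderiv ℝ (fun z => φ z y) x - L) := by
      funext x'; rw [hDg, hDcy]
    have hduC1 : ContDiff ℝ 1 (fderiv ℝ u) := hu.fderiv_right (by norm_num)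
    have hdφC1 : ContDiff ℝ 1 (fderiv ℝ (fun z => φ z y)) := (hφ y).fderiv_right (by norm_num)
    rw [e1, fderiv_fun_sub (hduC1.differentiable one_ne_zero).differentiableAt
      (((hdφC1.differentiable one_ne_zero).differentiableAt).sub_const L),
      fderiv_sub_const]
  -- lower bound on second derivative in direction v
  have hbound : ∀ x ∈ Ω, ε₀ * ‖v‖ ^ 2 ≤ fderiv ℝ (fderiv ℝ g) x v v := by
    intro x hx
    have hu2 : iteratedFDeriv ℝ 2 u x ![v, v] = fderiv ℝ (fderiv ℝ u) x v v := by
      rw [iteratedFDeriv_two_apply]; rfl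
    have hφ2' : iteratedFDeriv ℝ 2 (fun z => φ z y) x ![v, v]
        = fderiv ℝ (fderiv ℝ (fun z => φ z y)) x v v := by
      rw [iteratedFDeriv_two_apply]; rfl
    have h1 := huconv x hx v
    have h2 := abs_le.mp (hφ2 y x hx v)
    rw [hu2] at h1
    rw [hφ2'] at h2
    rw [hD2g]
    simp only [ContinuousLinearMap.coe_sub', Pi.sub_apply]
    nlinarith [h2.1, h2.2]
  -- the function along the segment
  set γ : ℝ → EuclideanSpace ℝ (Fin n) := fun t => x₀ + t • v with hγdef
  have hγΩ : ∀ t ∈ Set.Icc (0:ℝ) 1, γ t ∈ Ω := by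
    intro t ht
    have := hΩ hx₀ hx₁ (by linarith [ht.1, ht.2] : (0:ℝ) ≤ 1 - t) ht.1 (by ring)
    convert this using 1
    rw [hγdef, hv]
    module
  set h : ℝ → ℝ := fun t => fderiv ℝ g (γ t) v with hhdef
  have hDgC1 : ContDiff ℝ 1 (fderiv ℝ g) := hgC2.fderiv_right (by norm_num)
  have hderiv : ∀ t : ℝ, HasDerivAt h (fderiv ℝ (fderiv ℝ g) (γ t) v v) t := by
    intro t
    have hγ : HasDerivAt γ v t := by
      have : HasDerivAt (fun s : ℝ => s • v) ((1:ℝ) • v) t :=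
        (hasDerivAt_id t).smul_const v
      have h' := this.const_add x₀
      rw [one_smul] at h'
      exact h'
    have hF : HasFDerivAt (fderiv ℝ g) (fderiv ℝ (fderiv ℝ g) (γ t)) (γ t) :=
      ((hDgC1.differentiable one_ne_zero) (γ t)).hasFDerivAt
    have hcomp : HasDerivAt (fun s => fderiv ℝ g (γ s))
        (fderiv ℝ (fderiv ℝ g) (γ t) v) t := hF.comp_hasDerivAt t hγ
    exact (ContinuousLinearMap.apply ℝ ℝ v).hasFDerivAt.comp_hasDerivAt t hcomp
  have h0 : h 0 = 0 := by
    simp [hhdef, hγdef, hDg0]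
  have h1 : h 1 = 0 := by
    have : γ 1 = x₁ := by rw [hγdef, hv]; module
    simp [hhdef, this, hDg1]
  obtain ⟨s, hs, hseq⟩ := exists_hasDerivAt_eq_slope h
      (fun t => fderiv ℝ (fderiv ℝ g) (γ t) v v) one_pos
      (fun t _ => (hderiv t).continuousAt.continuousWithinAt)
      (fun t _ => hderiv t)
  rw [h0, h1] at hseq
  have hsΩ : γ s ∈ Ω := hγΩ s ⟨le_of_lt hs.1, le_of_lt hs.2⟩
  have := hbound (γ s) hsΩ
  rw [hseq] at this
  have hvpos : 0 < ‖v‖ ^ 2 := pow_pos (norm_pos_iff.mpr hvne) 2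
  nlinarith
end
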